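/- Let m, n be positive integers and G a graph on m+n vertices such that G is not of the form K_{r,s} + tK_1 for any positive integers r, s and non-negative integer t. If λ_2(G) ≤ √2 − 1, then σ(G, K_{m,n}) ≥ 1. -/

import Mathlib

open SimpleGraph Finset

/-- Adjacency matrix over `ℝ` (classical decidability). -/
noncomputable def adjMatR {n : ℕ} (G : SimpleGraph (Fin n)) : Matrix (Fin n) (Fin n) ℝ :=
  @SimpleGraph.adjMatrix ℝ (Fin n) G (Classical.decRel _) _ _

lemma adjMatR_isHermitian {n : ℕ} (G : SimpleGraph (Fin n)) : (adjMatR G).IsHermitian := by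
  have h : (adjMatR G).IsSymm := @SimpleGraph.isSymm_adjMatrix ℝ (Fin n) G (Classical.decRel _) _ _
  exact (Matrix.conjTranspose_eq_transpose_of_trivial _).trans h

/-- Multiset of adjacency eigenvalues (with multiplicity). -/
noncomputable def specMS {n : ℕ} (G : SimpleGraph (Fin n)) : Multiset ℝ :=
  Finset.univ.val.map (adjMatR_isHermitian G).eigenvalues

/-- `i`-th largest adjacency eigenvalue (0-indexed). -/
noncomputable def eigval {n : ℕ} (G : SimpleGraph (Fin n)) (i : ℕ) : ℝ :=
  ((specMS G).sort (· ≥ ·)).getD i 0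

/-- Graph energy. -/
noncomputable def energy {n : ℕ} (G : SimpleGraph (Fin n)) : ℝ :=
  ((specMS G).map (fun x => |x|)).sum

/-- ℓ¹ spectral distance. -/
noncomputable def specDist {n : ℕ} (G H : SimpleGraph (Fin n)) : ℝ :=
  ∑ i ∈ Finset.range n, |eigval G i - eigval H i|

/-- number of edges -/
noncomputable def numEdges {n : ℕ} (G : SimpleGraph (Fin n)) : ℕ := G.edgeSet.ncard

/-- `K_2 + (n-2)K_1`: one edge plus isolated vertices. -/
def oneEdgeG (n : ℕ) : SimpleGraph (Fin n) :=
  SimpleGraph.fromRel (fun u v => (u : ℕ) = 0 ∧ (v : ℕ) = 1)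

/-- `P_3 + (n-3)K_1`: a path on 3 vertices plus isolated vertices. -/
def path3G (n : ℕ) : SimpleGraph (Fin n) :=
  SimpleGraph.fromRel (fun u v => ((u : ℕ) = 0 ∧ (v : ℕ) = 1) ∨ ((u : ℕ) = 1 ∧ (v : ℕ) = 2))

/-- Complete bipartite graph `K_{a,b}` on `Fin (a+b)`. -/
def compBip (a b : ℕ) : SimpleGraph (Fin (a + b)) :=
  SimpleGraph.fromRel (fun u v => (u : ℕ) < a ∧ a ≤ (v : ℕ))

/-- `K_{r,s} + tK_1`: complete bipartite plus `t` isolated vertices. -/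
def compBipPlus (r s t : ℕ) : SimpleGraph (Fin (r + s + t)) :=
  SimpleGraph.fromRel (fun u v => (u : ℕ) < r ∧ r ≤ (v : ℕ) ∧ (v : ℕ) < r + s)

/-- `K_1 + K_{n-1}`: an isolated vertex plus a complete graph. -/
def k1PlusComplete (n : ℕ) : SimpleGraph (Fin n) :=
  SimpleGraph.fromRel (fun u v => (u : ℕ) ≠ 0 ∧ (v : ℕ) ≠ 0)

/-- `(K_1 + K_2) ∇ (n-3)K_1`: join of `K_1 + K_2` with `n-3` isolated vertices. -/
def k1k2JoinEmpty (n : ℕ) : SimpleGraph (Fin n) :=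
  SimpleGraph.fromRel (fun u v =>
    ((u : ℕ) = 1 ∧ (v : ℕ) = 2) ∨ ((u : ℕ) < 3 ∧ 3 ≤ (v : ℕ)))


section EigCore
open Matrix
variable {N : ℕ} (A : Matrix (Fin N) (Fin N) ℝ) (hA : A.IsHermitian)

noncomputable def coordsSD (x : Fin N → ℝ) : Fin N → ℝ :=
  (star (hA.eigenvectorUnitary : Matrix (Fin N) (Fin N) ℝ)) *ᵥ x

lemma coordsSD_add_smul (a b : ℝ) (u v : Fin N → ℝ) :
    coordsSD A hA (a • u + b • v) = a • coordsSD A hA u + b • coordsSD A hA v := by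
  simp [coordsSD, Matrix.mulVec_add, Matrix.mulVec_smul]

lemma mulVec_coordsSD (x : Fin N → ℝ) :
    (hA.eigenvectorUnitary : Matrix (Fin N) (Fin N) ℝ) *ᵥ (coordsSD A hA x) = x := by
  rw [coordsSD, Matrix.mulVec_mulVec]
  have h : (hA.eigenvectorUnitary : Matrix (Fin N) (Fin N) ℝ) *
      (star (hA.eigenvectorUnitary : Matrix (Fin N) (Fin N) ℝ)) = 1 :=
    (Matrix.mem_unitaryGroup_iff).mp hA.eigenvectorUnitary.2
  rw [h, Matrix.one_mulVec]

lemma quadSD_eq (x : Fin N → ℝ) :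
    dotProduct x (A *ᵥ x) = ∑ i, hA.eigenvalues i * (coordsSD A hA x i)^2 := by
  conv_lhs => rw [hA.spectral_theorem, Unitary.conjStarAlgAut_apply]
  rw [← Matrix.mulVec_mulVec, ← Matrix.mulVec_mulVec, Matrix.dotProduct_mulVec]
  have h : vecMul x (hA.eigenvectorUnitary : Matrix (Fin N) (Fin N) ℝ) = coordsSD A hA x := by
    rw [coordsSD]; ext i
    simp [Matrix.vecMul, Matrix.mulVec, dotProduct, Matrix.conjTranspose_apply, mul_comm]
  rw [h]
  simp only [Matrix.mulVec_diagonal, dotProduct, Function.comp_apply]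
  rw [show (star (hA.eigenvectorUnitary : Matrix (Fin N) (Fin N) ℝ)) *ᵥ x
    = coordsSD A hA x from rfl]
  exact Finset.sum_congr rfl fun i _ => by
    simp only [RCLike.ofReal_real_eq_id, id]; ring

lemma normSD_eq (x : Fin N → ℝ) :
    dotProduct x x = ∑ i, (coordsSD A hA x i)^2 := by
  conv_lhs => rw [← mulVec_coordsSD A hA x]
  rw [Matrix.dotProduct_mulVec]
  have h : vecMul ((hA.eigenvectorUnitary : Matrix (Fin N) (Fin N) ℝ) *ᵥ (coordsSD A hA x))
      (hA.eigenvectorUnitary : Matrix (Fin N) (Fin N) ℝ) = coordsSD A hA x := by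
    rw [mulVec_coordsSD, coordsSD]; ext i
    simp [Matrix.vecMul, Matrix.mulVec, dotProduct, Matrix.conjTranspose_apply, mul_comm]
  rw [h]
  simp [dotProduct, pow_two]

lemma sum_eigenvalues_eq_trace : ∑ i, hA.eigenvalues i = A.trace := by
  conv_rhs => rw [hA.spectral_theorem, Unitary.conjStarAlgAut_apply]
  rw [Matrix.trace_mul_cycle]
  have h : (star (hA.eigenvectorUnitary : Matrix (Fin N) (Fin N) ℝ)) *
      (hA.eigenvectorUnitary : Matrix (Fin N) (Fin N) ℝ) = 1 :=
    (Matrix.mem_unitaryGroup_iff').mp hA.eigenvectorUnitary.2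
  rw [h, Matrix.one_mul, Matrix.trace_diagonal]
  simp [RCLike.ofReal_real_eq_id]

lemma matrank_add_le (B : Matrix (Fin N) (Fin N) ℝ) : (A + B).rank ≤ A.rank + B.rank := by
  rw [Matrix.rank, Matrix.rank, Matrix.rank, Matrix.mulVecLin_add]
  have hle : LinearMap.range (A.mulVecLin + B.mulVecLin)
      ≤ LinearMap.range A.mulVecLin ⊔ LinearMap.range B.mulVecLin := by
    rintro y ⟨x, rfl⟩
    exact Submodule.add_mem_sup (LinearMap.mem_range_self _ x) (LinearMap.mem_range_self _ x)
  calc Module.finrank ℝ (LinearMap.range (A.mulVecLin + B.mulVecLin))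
      ≤ Module.finrank ℝ ↥(LinearMap.range A.mulVecLin ⊔ LinearMap.range B.mulVecLin) :=
        Submodule.finrank_mono hle
    _ ≤ _ := Submodule.finrank_add_le_finrank_add_finrank _ _

lemma rank_vecMulVec_le (u v : Fin N → ℝ) : (Matrix.vecMulVec u v).rank ≤ 1 := by
  rw [Matrix.vecMulVec_eq Unit]
  calc (Matrix.replicateCol Unit u * Matrix.replicateRow Unit v).rank ≤ (Matrix.replicateRow Unit v).rank :=
        Matrix.rank_mul_le_right _ _
    _ ≤ Fintype.card Unit := Matrix.rank_le_card_height _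
    _ = 1 := by simp

lemma exists_nonzero_coordSD {x : Fin N → ℝ} (hx : 0 < dotProduct x x) :
    ∃ i, coordsSD A hA x i ≠ 0 := by
  by_contra h
  push_neg at h
  rw [normSD_eq A hA] at hx
  have : ∑ i, (coordsSD A hA x i)^2 = 0 := by
    apply Finset.sum_eq_zero; intro i _; rw [h i]; ring
  linarith

lemma one_eig_ge {c : ℝ} {x : Fin N → ℝ} (hx : 0 < dotProduct x x)
    (hq : c * dotProduct x x ≤ dotProduct x (A *ᵥ x)) :
    ∃ i, c ≤ hA.eigenvalues i := by
  by_contra h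
  push_neg at h
  have key : ∑ i, (hA.eigenvalues i - c) * (coordsSD A hA x i)^2 < 0 := by
    obtain ⟨i0, hi0⟩ := exists_nonzero_coordSD A hA hx
    have : ∀ i ∈ Finset.univ, (hA.eigenvalues i - c) * (coordsSD A hA x i)^2 ≤ 0 :=
      fun i _ => mul_nonpos_of_nonpos_of_nonneg (by linarith [h i]) (sq_nonneg _)
    calc ∑ i, (hA.eigenvalues i - c) * (coordsSD A hA x i)^2
        < ∑ i : Fin N, (0:ℝ) := by
          apply Finset.sum_lt_sum this
          exact ⟨i0, Finset.mem_univ _,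
            mul_neg_of_neg_of_pos (by linarith [h i0]) (by positivity)⟩
      _ = 0 := by simp
  have expand : ∑ i, (hA.eigenvalues i - c) * (coordsSD A hA x i)^2
      = dotProduct x (A *ᵥ x) - c * dotProduct x x := by
    rw [quadSD_eq A hA, normSD_eq A hA, Finset.mul_sum, ← Finset.sum_sub_distrib]
    apply Finset.sum_congr rfl; intro i _; ring
  rw [expand] at key
  linarith

lemma two_eigs_aux {u v : Fin N → ℝ} (hu : 0 < dotProduct u u)
    (hv : 0 < dotProduct v v) (huv : dotProduct u v = 0)
    (S : Finset (Fin N)) (hS : S.card ≤ 1) :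
    ∃ x : Fin N → ℝ, 0 < dotProduct x x ∧ (∀ i ∈ S, coordsSD A hA x i = 0) ∧
      (∃ α β : ℝ, x = α • u + β • v) := by
  have hNE : Nonempty (Fin N) := by
    by_contra h
    rw [not_nonempty_iff] at h
    have : dotProduct u u = 0 := by simp [dotProduct, Finset.univ_eq_empty]
    rw [this] at hu; exact lt_irrefl _ hu
  have key : ∃ α β : ℝ, ¬(α = 0 ∧ β = 0) ∧
      ∀ i ∈ S, α * coordsSD A hA u i + β * coordsSD A hA v i = 0 := by
    rcases Finset.card_le_one_iff_subset_singleton.mp hS with ⟨i0, hsub⟩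
    by_cases h0 : coordsSD A hA u i0 = 0 ∧ coordsSD A hA v i0 = 0
    · exact ⟨1, 0, by simp, fun i hi => by
        have : i = i0 := Finset.mem_singleton.mp (hsub hi)
        subst this; rw [h0.1, h0.2]; ring⟩
    · refine ⟨coordsSD A hA v i0, -(coordsSD A hA u i0), ?_, fun i hi => by
        have : i = i0 := Finset.mem_singleton.mp (hsub hi)
        subst this; ring⟩
      intro ⟨h1, h2⟩
      exact h0 ⟨by linarith, h1⟩
  obtain ⟨α, β, hne, hzero⟩ := key
  refine ⟨α • u + β • v, ?_, ?_, α, β, rfl⟩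
  · have : dotProduct (α • u + β • v) (α • u + β • v)
        = α^2 * dotProduct u u + β^2 * dotProduct v v := by
      simp [dotProduct_add, add_dotProduct, smul_dotProduct, dotProduct_smul, smul_eq_mul,
        dotProduct_comm v u, huv]
      ring
    rw [this]
    rcases not_and_or.mp hne with h | h
    · have : 0 < α^2 * dotProduct u u := by positivity
      nlinarith [sq_nonneg β, mul_nonneg (sq_nonneg β) hv.le]
    · have : 0 < β^2 * dotProduct v v := by positivity
      nlinarith [mul_nonneg (sq_nonneg α) hu.le]
  · intro i hi
    rw [coordsSD_add_smul]
    have := hzero i hi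
    simpa [smul_eq_mul] using this

lemma two_eigs_ge {c : ℝ} {u v : Fin N → ℝ} (hu : 0 < dotProduct u u)
    (hv : 0 < dotProduct v v) (huv : dotProduct u v = 0)
    (hq : ∀ α β : ℝ, c * dotProduct (α • u + β • v) (α • u + β • v)
      ≤ dotProduct (α • u + β • v) (A *ᵥ (α • u + β • v))) :
    2 ≤ (Finset.univ.filter fun i => c ≤ hA.eigenvalues i).card := by
  by_contra hcard
  push_neg at hcard
  set S := Finset.univ.filter fun i => c ≤ hA.eigenvalues i with hSdef
  obtain ⟨x, hx, hxS, α, β, hxab⟩ := two_eigs_aux A hA hu hv huv S (by omega)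
  have hqx : c * dotProduct x x ≤ dotProduct x (A *ᵥ x) := by rw [hxab]; exact hq α β
  have key : ∑ i, (hA.eigenvalues i - c) * (coordsSD A hA x i)^2 < 0 := by
    obtain ⟨i0, hi0⟩ := exists_nonzero_coordSD A hA hx
    have hterm : ∀ i ∈ Finset.univ, (hA.eigenvalues i - c) * (coordsSD A hA x i)^2 ≤ 0 := by
      intro i _
      by_cases hiS : i ∈ S
      · rw [hxS i hiS]; simp
      · have : ¬ c ≤ hA.eigenvalues i := by
          intro hge; exact hiS (Finset.mem_filter.mpr ⟨Finset.mem_univ _, hge⟩)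
        exact mul_nonpos_of_nonpos_of_nonneg (by linarith) (sq_nonneg _)
    have hi0S : i0 ∉ S := fun hin => hi0 (hxS i0 hin)
    have : ¬ c ≤ hA.eigenvalues i0 := by
      intro hge; exact hi0S (Finset.mem_filter.mpr ⟨Finset.mem_univ _, hge⟩)
    calc ∑ i, (hA.eigenvalues i - c) * (coordsSD A hA x i)^2
        < ∑ i : Fin N, (0:ℝ) := by
          apply Finset.sum_lt_sum hterm
          exact ⟨i0, Finset.mem_univ _,
            mul_neg_of_neg_of_pos (by linarith) (by positivity)⟩
      _ = 0 := by simp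
  have expand : ∑ i, (hA.eigenvalues i - c) * (coordsSD A hA x i)^2
      = dotProduct x (A *ᵥ x) - c * dotProduct x x := by
    rw [quadSD_eq A hA, normSD_eq A hA, Finset.mul_sum, ← Finset.sum_sub_distrib]
    apply Finset.sum_congr rfl; intro i _; ring
  rw [expand] at key
  linarith

lemma two_eigs_le {c : ℝ} {u v : Fin N → ℝ} (hu : 0 < dotProduct u u)
    (hv : 0 < dotProduct v v) (huv : dotProduct u v = 0)
    (hq : ∀ α β : ℝ, dotProduct (α • u + β • v) (A *ᵥ (α • u + β • v))
      ≤ c * dotProduct (α • u + β • v) (α • u + β • v)) :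
    2 ≤ (Finset.univ.filter fun i => hA.eigenvalues i ≤ c).card := by
  by_contra hcard
  push_neg at hcard
  set S := Finset.univ.filter fun i => hA.eigenvalues i ≤ c with hSdef
  obtain ⟨x, hx, hxS, α, β, hxab⟩ := two_eigs_aux A hA hu hv huv S (by omega)
  have hqx : dotProduct x (A *ᵥ x) ≤ c * dotProduct x x := by rw [hxab]; exact hq α β
  have key : 0 < ∑ i, (hA.eigenvalues i - c) * (coordsSD A hA x i)^2 := by
    obtain ⟨i0, hi0⟩ := exists_nonzero_coordSD A hA hx
    have hterm : ∀ i ∈ Finset.univ, 0 ≤ (hA.eigenvalues i - c) * (coordsSD A hA x i)^2 := by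
      intro i _
      by_cases hiS : i ∈ S
      · rw [hxS i hiS]; simp
      · have : ¬ hA.eigenvalues i ≤ c := by
          intro hge; exact hiS (Finset.mem_filter.mpr ⟨Finset.mem_univ _, hge⟩)
        exact mul_nonneg (by linarith) (sq_nonneg _)
    have hi0S : i0 ∉ S := fun hin => hi0 (hxS i0 hin)
    have : ¬ hA.eigenvalues i0 ≤ c := by
      intro hge; exact hi0S (Finset.mem_filter.mpr ⟨Finset.mem_univ _, hge⟩)
    calc (0:ℝ) = ∑ i : Fin N, (0:ℝ) := by simp
      _ < ∑ i, (hA.eigenvalues i - c) * (coordsSD A hA x i)^2 := by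
          apply Finset.sum_lt_sum (fun i hi => hterm i hi)
          exact ⟨i0, Finset.mem_univ _, mul_pos (by linarith) (by positivity)⟩
  have expand : ∑ i, (hA.eigenvalues i - c) * (coordsSD A hA x i)^2
      = dotProduct x (A *ᵥ x) - c * dotProduct x x := by
    rw [quadSD_eq A hA, normSD_eq A hA, Finset.mul_sum, ← Finset.sum_sub_distrib]
    apply Finset.sum_congr rfl; intro i _; ring
  rw [expand] at key
  linarith

end EigCore

section SortedLists
variable {c : ℝ}

lemma filt_le_of_get_lt : ∀ (l : List ℝ), l.Pairwise (· ≥ ·) → ∀ (i : ℕ) (hi : i < l.length),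
    ¬ (c ≤ l.get ⟨i, hi⟩) → (l.filter (fun x => decide (c ≤ x))).length ≤ i := by
  intro l
  induction l with
  | nil => intro _ i hi; simp at hi
  | cons a t ih =>
    intro hs i hi hlt
    cases i with
    | zero =>
      have ha : ¬ (c ≤ a) := hlt
      have : (a :: t).filter (fun x => decide (c ≤ x)) = [] := by
        rw [List.filter_eq_nil_iff]
        intro x hx
        simp only [decide_eq_true_eq]
        rcases List.mem_cons.mp hx with h | h
        · subst h; exact ha
        · intro hcx; exact ha (le_trans hcx (List.rel_of_pairwise_cons hs h))
      simp [this]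
    | succ i =>
      have hst : t.Pairwise (· ≥ ·) := hs.of_cons
      have ht := ih hst i (by simpa using hi) hlt
      simp only [List.filter_cons]
      by_cases hca : c ≤ a
      · simp [hca]; omega
      · simp [hca]; omega

lemma filt_le_of_lt_get : ∀ (l : List ℝ), l.Pairwise (· ≥ ·) → ∀ (i : ℕ) (hi : i < l.length),
    ¬ (l.get ⟨i, hi⟩ ≤ c) → (l.filter (fun x => decide (x ≤ c))).length ≤ l.length - i - 1 := by
  intro l
  induction l with
  | nil => intro _ i hi; simp at hi
  | cons a t ih =>
    intro hs i hi hlt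
    have hat : ∀ x ∈ t, x ≤ a := fun x hx => List.rel_of_pairwise_cons hs hx
    cases i with
    | zero =>
      have ha : ¬ (a ≤ c) := hlt
      rw [List.filter_cons_of_neg (by simpa using ha)]
      simpa using (List.length_filter_le _ t)
    | succ i =>
      have hit : i < t.length := by simpa using hi
      have hst : t.Pairwise (· ≥ ·) := hs.of_cons
      have ht := ih hst i hit hlt
      have ha : ¬ (a ≤ c) := by
        intro hac
        exact hlt (le_trans (hat _ (t.get_mem _)) hac)
      rw [List.filter_cons_of_neg (by simpa using ha)]
      simp only [List.length_cons]
      omega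

lemma sorted_getD_anti (l : List ℝ) (hl : l.Pairwise (· ≥ ·)) {i j : ℕ} (hij : i ≤ j)
    (hj : j < l.length) : l.getD j 0 ≤ l.getD i 0 := by
  rw [List.getD_eq_get _ _ ⟨j, hj⟩, List.getD_eq_get _ _ ⟨i, lt_of_le_of_lt hij hj⟩]
  rcases eq_or_lt_of_le hij with h | h
  · subst h; exact le_refl _
  · exact List.pairwise_iff_get.mp hl ⟨i, _⟩ ⟨j, _⟩ h

lemma ms_ge_of_count (s : Multiset ℝ) (i : ℕ) (hcount : i + 1 ≤ (s.filter (fun x => c ≤ x)).card) :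
    c ≤ (s.sort (· ≥ ·)).getD i 0 := by
  set l := s.sort (· ≥ ·) with hldef
  have hls : l.Pairwise (· ≥ ·) := s.pairwise_sort _
  have hlen : l.length = Multiset.card s := s.length_sort _
  have hcard : (s.filter (fun x => c ≤ x)).card = (l.filter (fun x => decide (c ≤ x))).length := by
    conv_lhs => rw [← s.sort_eq (· ≥ ·)]
    rw [← hldef, Multiset.filter_coe, Multiset.coe_card]
  have hi : i < l.length := by
    rw [hlen]
    calc i < i + 1 := Nat.lt_succ_self _
    _ ≤ (s.filter (fun x => c ≤ x)).card := hcount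
    _ ≤ Multiset.card s := Multiset.card_le_card (Multiset.filter_le _ _)
  by_contra h
  rw [List.getD_eq_get _ _ ⟨_, hi⟩] at h
  have := filt_le_of_get_lt l hls i hi h
  omega

lemma ms_le_of_count (s : Multiset ℝ) (k : ℕ) (hk : 1 ≤ k)
    (hcount : k ≤ (s.filter (fun x => x ≤ c)).card) :
    (s.sort (· ≥ ·)).getD (Multiset.card s - k) 0 ≤ c := by
  set l := s.sort (· ≥ ·) with hldef
  have hls : l.Pairwise (· ≥ ·) := s.pairwise_sort _
  have hlen : l.length = Multiset.card s := s.length_sort _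
  have hcard : (s.filter (fun x => x ≤ c)).card = (l.filter (fun x => decide (x ≤ c))).length := by
    conv_lhs => rw [← s.sort_eq (· ≥ ·)]
    rw [← hldef, Multiset.filter_coe, Multiset.coe_card]
  have hkcard : k ≤ Multiset.card s :=
    le_trans hcount (Multiset.card_le_card (Multiset.filter_le _ _))
  have hi : Multiset.card s - k < l.length := by omega
  by_contra h
  rw [List.getD_eq_get _ _ ⟨_, hi⟩] at h
  have := filt_le_of_lt_get l hls _ hi h
  omega

end SortedLists

section Bridge
open Matrix
variable {N : ℕ} (G : SimpleGraph (Fin N))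

lemma specMS_card : Multiset.card (specMS G) = N := by
  simp [specMS]

lemma specMS_filter_card (p : ℝ → Prop) [DecidablePred p] :
    ((specMS G).filter p).card
      = (Finset.univ.filter fun i => p ((adjMatR_isHermitian G).eigenvalues i)).card := by
  rw [specMS, Multiset.filter_map]
  rw [Multiset.card_map]
  rfl

lemma adjMatR_apply (u v : Fin N) :
    adjMatR G u v = @ite _ (G.Adj u v) (Classical.dec _) (1:ℝ) 0 := by
  rw [adjMatR]
  exact @SimpleGraph.adjMatrix_apply ℝ (Fin N) G (Classical.decRel _) u v _ _

lemma adjMatR_of_adj {u v : Fin N} (h : G.Adj u v) : adjMatR G u v = 1 := by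
  rw [adjMatR_apply, if_pos h]

lemma adjMatR_of_not_adj {u v : Fin N} (h : ¬ G.Adj u v) : adjMatR G u v = 0 := by
  rw [adjMatR_apply, if_neg h]

lemma adjMatR_self (u : Fin N) : adjMatR G u u = 0 :=
  adjMatR_of_not_adj G (G.loopless.irrefl u)

lemma trace_adjMatR : (adjMatR G).trace = 0 := by
  rw [adjMatR]
  exact @SimpleGraph.trace_adjMatrix ℝ (Fin N) G (Classical.decRel _) _ _ _

lemma eigval_ge_of_count {c : ℝ} {i : ℕ}
    (h : i + 1 ≤ (Finset.univ.filter fun j => c ≤ (adjMatR_isHermitian G).eigenvalues j).card) :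
    c ≤ eigval G i := by
  rw [eigval]
  apply ms_ge_of_count
  rw [specMS_filter_card G (fun x => c ≤ x)]
  exact h

lemma eigval_le_of_count {c : ℝ} {k : ℕ} (hk : 1 ≤ k)
    (h : k ≤ (Finset.univ.filter fun j => (adjMatR_isHermitian G).eigenvalues j ≤ c).card) :
    eigval G (N - k) ≤ c := by
  rw [eigval, show N - k = Multiset.card (specMS G) - k by rw [specMS_card]]
  apply ms_le_of_count _ _ hk
  rw [specMS_filter_card G (fun x => x ≤ c)]
  exact h

lemma eigval_anti {i j : ℕ} (hij : i ≤ j) (hj : j < N) : eigval G j ≤ eigval G i := by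
  have hlen : ((specMS G).sort (· ≥ ·)).length = Multiset.card (specMS G) :=
    (specMS G).length_sort _
  rw [specMS_card] at hlen
  rw [eigval, eigval]
  exact sorted_getD_anti _ ((specMS G).pairwise_sort _) hij (by rw [hlen]; exact hj)

lemma herm_zero_eigs {A : Matrix (Fin N) (Fin N) ℝ} (hA : A.IsHermitian) (h0 : A = 0) :
    ∀ j, hA.eigenvalues j = 0 := by
  subst h0
  intro j
  have h1 := hA.mulVec_eigenvectorBasis j
  rw [Matrix.zero_mulVec] at h1
  rcases smul_eq_zero.mp (by ext k; exact (congrFun h1 k).symm :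
      hA.eigenvalues j • hA.eigenvectorBasis j = 0) with h | h
  · exact h
  · exact absurd h (hA.eigenvectorBasis.orthonormal.ne_zero j)

lemma eigval_of_edgeless (h : ∀ u v, ¬ G.Adj u v) (i : ℕ) : eigval G i = 0 := by
  have hA0 : adjMatR G = 0 := by
    ext u v; rw [adjMatR_of_not_adj G (h u v), Matrix.zero_apply]
  have hlam : ∀ j, (adjMatR_isHermitian G).eigenvalues j = 0 :=
    herm_zero_eigs (adjMatR_isHermitian G) hA0
  have hmem : ∀ x ∈ (specMS G).sort (· ≥ ·), x = 0 := by
    intro x hx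
    have : x ∈ specMS G := by
      rw [← Multiset.mem_sort (· ≥ ·)]; exact hx
    rw [specMS, Multiset.mem_map] at this
    obtain ⟨j, _, rfl⟩ := this
    exact hlam j
  by_cases hi : i < ((specMS G).sort (· ≥ ·)).length
  · rw [eigval, List.getD_eq_get _ _ ⟨_, hi⟩]
    exact hmem _ (List.get_mem _ _)
  · rw [eigval, List.getD_eq_default _ _ (by omega)]

lemma abs_eigval_le_specDist (H : SimpleGraph (Fin N)) {i : ℕ} (hi : i < N) :
    |eigval G i - eigval H i| ≤ specDist G H := by
  rw [specDist]
  exact Finset.single_le_sum (f := fun j => |eigval G j - eigval H j|)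
    (fun j _ => abs_nonneg _) (Finset.mem_range.mpr hi)

end Bridge

section Vecs
open Matrix
variable {N : ℕ}

def vec2 (a b : Fin N) (xa xb : ℝ) : Fin N → ℝ :=
  fun w => if w = a then xa else if w = b then xb else 0

def vec3 (a b c : Fin N) (xa xb xc : ℝ) : Fin N → ℝ :=
  fun w => if w = a then xa else if w = b then xb else if w = c then xc else 0

def vec4 (a b c d : Fin N) (xa xb xc xd : ℝ) : Fin N → ℝ :=
  fun w => if w = a then xa else if w = b then xb else if w = c then xc else
    if w = d then xd else 0

section V2
variable {a b : Fin N}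

lemma sum_support2 (hab : a ≠ b) (f : Fin N → ℝ)
    (hf : ∀ w, w ∉ ({a, b} : Finset (Fin N)) → f w = 0) :
    ∑ w, f w = f a + f b := by
  rw [← Finset.sum_subset (Finset.subset_univ ({a, b} : Finset (Fin N)))
    (fun x _ hx => hf x hx)]
  rw [show ({a, b} : Finset (Fin N)) = insert a {b} from rfl]
  rw [Finset.sum_insert (by simp [hab]), Finset.sum_singleton]

lemma vec2_eval (xa xb : ℝ) (hab : a ≠ b) :
    vec2 a b xa xb a = xa ∧ vec2 a b xa xb b = xb := by
  constructor
  · simp [vec2]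
  · simp [vec2, hab.symm]

lemma vec2_zero (xa xb : ℝ) {w : Fin N} (hw : w ∉ ({a, b} : Finset (Fin N))) :
    vec2 a b xa xb w = 0 := by
  simp only [Finset.mem_insert, Finset.mem_singleton, not_or] at hw
  simp [vec2, hw.1, hw.2]

lemma dot_vec2 (xa xb ya yb : ℝ) (hab : a ≠ b) :
    dotProduct (vec2 a b xa xb) (vec2 a b ya yb) = xa*ya + xb*yb := by
  obtain ⟨ea, eb⟩ := vec2_eval xa xb hab
  obtain ⟨fa, fb⟩ := vec2_eval ya yb hab
  rw [dotProduct, sum_support2 hab _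
    (fun w hw => by rw [vec2_zero xa xb hw]; ring), ea, eb, fa, fb]

lemma quad_vec2 (G : SimpleGraph (Fin N)) (xa xb : ℝ) (hab : a ≠ b) :
    dotProduct (vec2 a b xa xb) (adjMatR G *ᵥ (vec2 a b xa xb))
      = 2 * (adjMatR G a b * (xa*xb)) := by
  obtain ⟨ea, eb⟩ := vec2_eval xa xb hab
  set x := vec2 a b xa xb with hx
  have hmv : ∀ w : Fin N, (adjMatR G *ᵥ x) w = adjMatR G w a * xa + adjMatR G w b * xb := by
    intro w
    rw [Matrix.mulVec, dotProduct, sum_support2 hab _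
      (fun u hu => by rw [hx, vec2_zero xa xb hu]; ring), ea, eb]
  have hsymm : adjMatR G b a = adjMatR G a b := by
    by_cases h : G.Adj a b
    · rw [adjMatR_of_adj G h, adjMatR_of_adj G h.symm]
    · rw [adjMatR_of_not_adj G h, adjMatR_of_not_adj G (fun hcon => h hcon.symm)]
  rw [dotProduct, sum_support2 hab _
    (fun w hw => by rw [hx, vec2_zero xa xb hw]; ring), ea, eb,
    hmv a, hmv b, adjMatR_self, adjMatR_self, hsymm]
  ring
end V2

section V3
variable {a b c : Fin N}

lemma sum_support3 (hab : a ≠ b) (hac : a ≠ c) (hbc : b ≠ c)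
    (f : Fin N → ℝ) (hf : ∀ w, w ∉ ({a, b, c} : Finset (Fin N)) → f w = 0) :
    ∑ w, f w = f a + f b + f c := by
  rw [← Finset.sum_subset (Finset.subset_univ ({a, b, c} : Finset (Fin N)))
    (fun x _ hx => hf x hx)]
  rw [show ({a, b, c} : Finset (Fin N)) = insert a (insert b {c}) from rfl]
  rw [Finset.sum_insert (by simp [hab, hac]), Finset.sum_insert (by simp [hbc]),
    Finset.sum_singleton]
  ring

lemma vec3_eval (xa xb xc : ℝ) (hab : a ≠ b) (hac : a ≠ c) (hbc : b ≠ c) :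
    vec3 a b c xa xb xc a = xa ∧ vec3 a b c xa xb xc b = xb ∧ vec3 a b c xa xb xc c = xc := by
  refine ⟨by simp [vec3], ?_, ?_⟩ <;> simp [vec3, hab.symm, hac.symm, hbc.symm]

lemma vec3_zero (xa xb xc : ℝ) {w : Fin N} (hw : w ∉ ({a, b, c} : Finset (Fin N))) :
    vec3 a b c xa xb xc w = 0 := by
  simp only [Finset.mem_insert, Finset.mem_singleton, not_or] at hw
  simp [vec3, hw.1, hw.2.1, hw.2.2]

lemma smul_add_vec3 (α β xa xb xc ya yb yc : ℝ) :
    α • vec3 a b c xa xb xc + β • vec3 a b c ya yb yc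
      = vec3 a b c (α*xa+β*ya) (α*xb+β*yb) (α*xc+β*yc) := by
  funext w
  simp only [Pi.add_apply, Pi.smul_apply, smul_eq_mul, vec3]
  split_ifs <;> ring

lemma dot_vec3 (xa xb xc ya yb yc : ℝ) (hab : a ≠ b) (hac : a ≠ c) (hbc : b ≠ c) :
    dotProduct (vec3 a b c xa xb xc) (vec3 a b c ya yb yc)
      = xa*ya + xb*yb + xc*yc := by
  obtain ⟨ea, eb, ec⟩ := vec3_eval xa xb xc hab hac hbc
  obtain ⟨fa, fb, fc⟩ := vec3_eval ya yb yc hab hac hbc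
  rw [dotProduct, sum_support3 hab hac hbc _
    (fun w hw => by rw [vec3_zero xa xb xc hw]; ring), ea, eb, ec, fa, fb, fc]

lemma quad_vec3 (G : SimpleGraph (Fin N)) (xa xb xc : ℝ) (hab : a ≠ b) (hac : a ≠ c)
    (hbc : b ≠ c) :
    dotProduct (vec3 a b c xa xb xc) (adjMatR G *ᵥ (vec3 a b c xa xb xc))
      = 2 * (adjMatR G a b * (xa*xb) + adjMatR G a c * (xa*xc) + adjMatR G b c * (xb*xc)) := by
  obtain ⟨ea, eb, ec⟩ := vec3_eval xa xb xc hab hac hbc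
  set x := vec3 a b c xa xb xc with hx
  have hmv : ∀ w : Fin N, (adjMatR G *ᵥ x) w
      = adjMatR G w a * xa + adjMatR G w b * xb + adjMatR G w c * xc := by
    intro w
    rw [Matrix.mulVec, dotProduct, sum_support3 hab hac hbc _
      (fun u hu => by rw [hx, vec3_zero xa xb xc hu]; ring), ea, eb, ec]
  have hsymm : ∀ u v : Fin N, adjMatR G u v = adjMatR G v u := by
    intro u v
    by_cases h : G.Adj u v
    · rw [adjMatR_of_adj G h, adjMatR_of_adj G h.symm]
    · rw [adjMatR_of_not_adj G h, adjMatR_of_not_adj G (fun hcon => h hcon.symm)]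
  rw [dotProduct, sum_support3 hab hac hbc _
    (fun w hw => by rw [hx, vec3_zero xa xb xc hw]; ring), ea, eb, ec,
    hmv a, hmv b, hmv c, adjMatR_self, adjMatR_self, adjMatR_self,
    hsymm b a, hsymm c a, hsymm c b]
  ring
end V3

section V4
variable {a b c d : Fin N}

lemma sum_support4 (hab : a ≠ b) (hac : a ≠ c) (had : a ≠ d) (hbc : b ≠ c) (hbd : b ≠ d)
    (hcd : c ≠ d) (f : Fin N → ℝ) (hf : ∀ w, w ∉ ({a, b, c, d} : Finset (Fin N)) → f w = 0) :
    ∑ w, f w = f a + f b + f c + f d := by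
  rw [← Finset.sum_subset (Finset.subset_univ ({a, b, c, d} : Finset (Fin N)))
    (fun x _ hx => hf x hx)]
  rw [show ({a, b, c, d} : Finset (Fin N)) = insert a (insert b (insert c {d})) from rfl]
  rw [Finset.sum_insert (by simp [hab, hac, had]), Finset.sum_insert (by simp [hbc, hbd]),
    Finset.sum_insert (by simp [hcd]), Finset.sum_singleton]
  ring

lemma vec4_eval (xa xb xc xd : ℝ) (hab : a ≠ b) (hac : a ≠ c) (had : a ≠ d) (hbc : b ≠ c)
    (hbd : b ≠ d) (hcd : c ≠ d) :
    vec4 a b c d xa xb xc xd a = xa ∧ vec4 a b c d xa xb xc xd b = xb ∧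
    vec4 a b c d xa xb xc xd c = xc ∧ vec4 a b c d xa xb xc xd d = xd := by
  refine ⟨by simp [vec4], ?_, ?_, ?_⟩ <;> simp [vec4, hab.symm, hac.symm, had.symm, hbc.symm,
    hbd.symm, hcd.symm]

lemma vec4_zero (xa xb xc xd : ℝ) {w : Fin N} (hw : w ∉ ({a, b, c, d} : Finset (Fin N))) :
    vec4 a b c d xa xb xc xd w = 0 := by
  simp only [Finset.mem_insert, Finset.mem_singleton, not_or] at hw
  simp [vec4, hw.1, hw.2.1, hw.2.2.1, hw.2.2.2]

lemma smul_add_vec4 (α β xa xb xc xd ya yb yc yd : ℝ) :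
    α • vec4 a b c d xa xb xc xd + β • vec4 a b c d ya yb yc yd
      = vec4 a b c d (α*xa+β*ya) (α*xb+β*yb) (α*xc+β*yc) (α*xd+β*yd) := by
  funext w
  simp only [Pi.add_apply, Pi.smul_apply, smul_eq_mul, vec4]
  split_ifs <;> ring

lemma dot_vec4 (xa xb xc xd ya yb yc yd : ℝ) (hab : a ≠ b) (hac : a ≠ c) (had : a ≠ d)
    (hbc : b ≠ c) (hbd : b ≠ d) (hcd : c ≠ d) :
    dotProduct (vec4 a b c d xa xb xc xd) (vec4 a b c d ya yb yc yd)
      = xa*ya + xb*yb + xc*yc + xd*yd := by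
  obtain ⟨ea, eb, ec, ed⟩ := vec4_eval xa xb xc xd hab hac had hbc hbd hcd
  obtain ⟨fa, fb, fc, fd⟩ := vec4_eval ya yb yc yd hab hac had hbc hbd hcd
  rw [dotProduct, sum_support4 hab hac had hbc hbd hcd _
    (fun w hw => by rw [vec4_zero xa xb xc xd hw]; ring), ea, eb, ec, ed, fa, fb, fc, fd]

lemma quad_vec4 (G : SimpleGraph (Fin N)) (xa xb xc xd : ℝ) (hab : a ≠ b) (hac : a ≠ c)
    (had : a ≠ d) (hbc : b ≠ c) (hbd : b ≠ d) (hcd : c ≠ d) :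
    dotProduct (vec4 a b c d xa xb xc xd) (adjMatR G *ᵥ (vec4 a b c d xa xb xc xd))
      = 2 * (adjMatR G a b * (xa*xb) + adjMatR G a c * (xa*xc) + adjMatR G a d * (xa*xd)
        + adjMatR G b c * (xb*xc) + adjMatR G b d * (xb*xd) + adjMatR G c d * (xc*xd)) := by
  obtain ⟨ea, eb, ec, ed⟩ := vec4_eval xa xb xc xd hab hac had hbc hbd hcd
  set x := vec4 a b c d xa xb xc xd with hx
  have hmv : ∀ w : Fin N, (adjMatR G *ᵥ x) w
      = adjMatR G w a * xa + adjMatR G w b * xb + adjMatR G w c * xc + adjMatR G w d * xd := by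
    intro w
    rw [Matrix.mulVec, dotProduct, sum_support4 hab hac had hbc hbd hcd _
      (fun u hu => by rw [hx, vec4_zero xa xb xc xd hu]; ring), ea, eb, ec, ed]
  have hsymm : ∀ u v : Fin N, adjMatR G u v = adjMatR G v u := by
    intro u v
    by_cases h : G.Adj u v
    · rw [adjMatR_of_adj G h, adjMatR_of_adj G h.symm]
    · rw [adjMatR_of_not_adj G h, adjMatR_of_not_adj G (fun hcon => h hcon.symm)]
  rw [dotProduct, sum_support4 hab hac had hbc hbd hcd _
    (fun w hw => by rw [hx, vec4_zero xa xb xc xd hw]; ring), ea, eb, ec, ed,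
    hmv a, hmv b, hmv c, hmv d, adjMatR_self, adjMatR_self, adjMatR_self, adjMatR_self,
    hsymm b a, hsymm c a, hsymm d a, hsymm c b, hsymm d b, hsymm d c]
  ring
end V4
end Vecs

section CaseLemmas
open Matrix
variable {N : ℕ} (G : SimpleGraph (Fin N))

lemma triangle_eigs {a b c : Fin N} (hab : G.Adj a b) (hac : G.Adj a c) (hbc : G.Adj b c) :
    2 ≤ (Finset.univ.filter fun i => (adjMatR_isHermitian G).eigenvalues i ≤ -1).card := by
  have h1 : a ≠ b := hab.ne
  have h2 : a ≠ c := hac.ne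
  have h3 : b ≠ c := hbc.ne
  apply two_eigs_le (adjMatR G) (adjMatR_isHermitian G)
    (u := vec3 a b c 1 (-1) 0) (v := vec3 a b c 1 1 (-2))
  · rw [dot_vec3 _ _ _ _ _ _ h1 h2 h3]; norm_num
  · rw [dot_vec3 _ _ _ _ _ _ h1 h2 h3]; norm_num
  · rw [dot_vec3 _ _ _ _ _ _ h1 h2 h3]; norm_num
  · intro α β
    rw [smul_add_vec3, quad_vec3 G _ _ _ h1 h2 h3, dot_vec3 _ _ _ _ _ _ h1 h2 h3,
      adjMatR_of_adj G hab, adjMatR_of_adj G hac, adjMatR_of_adj G hbc]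
    apply le_of_eq
    ring

lemma twoK2_eigs {a b c d : Fin N} (hab : G.Adj a b) (hcd : G.Adj c d)
    (hac : ¬G.Adj a c) (had : ¬G.Adj a d) (hbc : ¬G.Adj b c) (hbd : ¬G.Adj b d)
    (nac : a ≠ c) (nad : a ≠ d) (nbc : b ≠ c) (nbd : b ≠ d) :
    2 ≤ (Finset.univ.filter fun i => (1:ℝ) ≤ (adjMatR_isHermitian G).eigenvalues i).card := by
  have nab : a ≠ b := hab.ne
  have ncd : c ≠ d := hcd.ne
  apply two_eigs_ge (adjMatR G) (adjMatR_isHermitian G)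
    (u := vec4 a b c d 1 1 0 0) (v := vec4 a b c d 0 0 1 1)
  · rw [dot_vec4 _ _ _ _ _ _ _ _ nab nac nad nbc nbd ncd]; norm_num
  · rw [dot_vec4 _ _ _ _ _ _ _ _ nab nac nad nbc nbd ncd]; norm_num
  · rw [dot_vec4 _ _ _ _ _ _ _ _ nab nac nad nbc nbd ncd]; norm_num
  · intro α β
    rw [smul_add_vec4, quad_vec4 G _ _ _ _ nab nac nad nbc nbd ncd,
      dot_vec4 _ _ _ _ _ _ _ _ nab nac nad nbc nbd ncd,
      adjMatR_of_adj G hab, adjMatR_of_adj G hcd, adjMatR_of_not_adj G hac,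
      adjMatR_of_not_adj G had, adjMatR_of_not_adj G hbc, adjMatR_of_not_adj G hbd]
    apply le_of_eq
    ring

lemma p4_eigs {a b c d : Fin N} (hab : G.Adj a b) (hbc : G.Adj b c) (hcd : G.Adj c d)
    (hac : ¬G.Adj a c) (had : ¬G.Adj a d) (hbd : ¬G.Adj b d)
    (nac : a ≠ c) (nad : a ≠ d) (nbd : b ≠ d) :
    2 ≤ (Finset.univ.filter fun i =>
      (Real.sqrt 5 - 1)/2 ≤ (adjMatR_isHermitian G).eigenvalues i).card := by
  have nab : a ≠ b := hab.ne
  have nbc : b ≠ c := hbc.ne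
  have ncd : c ≠ d := hcd.ne
  have hs0 : (0:ℝ) ≤ Real.sqrt 5 := Real.sqrt_nonneg 5
  have hs2 : (Real.sqrt 5)^2 = 5 := Real.sq_sqrt (by norm_num)
  set s := Real.sqrt 5 with hsdef
  apply two_eigs_ge (adjMatR G) (adjMatR_isHermitian G)
    (u := vec4 a b c d 1 ((1+s)/2) ((1+s)/2) 1) (v := vec4 a b c d 1 ((s-1)/2) (-((s-1)/2)) (-1))
  · rw [dot_vec4 _ _ _ _ _ _ _ _ nab nac nad nbc nbd ncd]
    nlinarith [sq_nonneg ((1+s)/2)]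
  · rw [dot_vec4 _ _ _ _ _ _ _ _ nab nac nad nbc nbd ncd]
    nlinarith [sq_nonneg ((s-1)/2)]
  · rw [dot_vec4 _ _ _ _ _ _ _ _ nab nac nad nbc nbd ncd]
    ring
  · intro α β
    rw [smul_add_vec4, quad_vec4 G _ _ _ _ nab nac nad nbc nbd ncd,
      dot_vec4 _ _ _ _ _ _ _ _ nab nac nad nbc nbd ncd,
      adjMatR_of_adj G hab, adjMatR_of_adj G hbc, adjMatR_of_adj G hcd,
      adjMatR_of_not_adj G hac, adjMatR_of_not_adj G had, adjMatR_of_not_adj G hbd]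
    nlinarith [sq_nonneg α, sq_nonneg β, mul_nonneg (sq_nonneg α) hs0,
      mul_nonneg (sq_nonneg β) hs0, hs2, hs0]
end CaseLemmas

section KSpec
open Matrix
variable (m n : ℕ)

lemma compBip_adj (u v : Fin (m + n)) :
    (compBip m n).Adj u v ↔ (((u:ℕ) < m ∧ m ≤ (v:ℕ)) ∨ ((v:ℕ) < m ∧ m ≤ (u:ℕ))) := by
  rw [compBip, SimpleGraph.fromRel_adj]
  constructor
  · rintro ⟨_, h⟩; exact h
  · intro h
    refine ⟨fun he => ?_, h⟩
    subst he
    rcases h with ⟨h1, h2⟩ | ⟨h1, h2⟩ <;> omega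

lemma adjMatR_compBip_eq :
    adjMatR (compBip m n) =
      Matrix.vecMulVec (fun i : Fin (m+n) => if (i:ℕ) < m then (1:ℝ) else 0)
        (fun i : Fin (m+n) => if (i:ℕ) < m then (0:ℝ) else 1)
      + Matrix.vecMulVec (fun i : Fin (m+n) => if (i:ℕ) < m then (0:ℝ) else 1)
        (fun i : Fin (m+n) => if (i:ℕ) < m then (1:ℝ) else 0) := by
  ext i j
  rw [Matrix.add_apply, Matrix.vecMulVec_apply, Matrix.vecMulVec_apply]
  by_cases hi : (i:ℕ) < m <;> by_cases hj : (j:ℕ) < m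
  · rw [adjMatR_of_not_adj _ (by rw [compBip_adj]; omega)]; simp [hi, hj]
  · rw [adjMatR_of_adj _ (by rw [compBip_adj]; omega)]; simp [hi, hj]
  · rw [adjMatR_of_adj _ (by rw [compBip_adj]; omega)]; simp [hi, hj]
  · rw [adjMatR_of_not_adj _ (by rw [compBip_adj]; omega)]; simp [hi, hj]

lemma rank_compBip_le : (adjMatR (compBip m n)).rank ≤ 2 := by
  rw [adjMatR_compBip_eq]
  calc _ ≤ _ := matrank_add_le _ _
    _ ≤ 1 + 1 := add_le_add (_root_.rank_vecMulVec_le _ _) (_root_.rank_vecMulVec_le _ _)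
    _ = 2 := rfl

lemma card_nonzero_eigs_le :
    (Finset.univ.filter fun i =>
      (adjMatR_isHermitian (compBip m n)).eigenvalues i ≠ 0).card ≤ 2 := by
  classical
  have h := (adjMatR_isHermitian (compBip m n)).rank_eq_card_non_zero_eigs
  rw [Fintype.card_subtype] at h
  calc _ = (adjMatR (compBip m n)).rank := h.symm
    _ ≤ 2 := rank_compBip_le m n

lemma K_neg_card_le_one :
    (Finset.univ.filter fun i => (adjMatR_isHermitian (compBip m n)).eigenvalues i < 0).card ≤ 1 ∧
    (Finset.univ.filter fun i => 0 < (adjMatR_isHermitian (compBip m n)).eigenvalues i).card ≤ 1 := by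
  classical
  set lam := (adjMatR_isHermitian (compBip m n)).eigenvalues with hlam
  set Ng := Finset.univ.filter fun i => lam i < 0 with hNg
  set P := Finset.univ.filter fun i => 0 < lam i with hP
  have hsum : ∑ i, lam i = 0 := by
    rw [hlam, sum_eigenvalues_eq_trace, trace_adjMatR]
  have hsub : Ng ∪ P ⊆ Finset.univ.filter fun i => lam i ≠ 0 := by
    intro i hi
    rcases Finset.mem_union.mp hi with h | h
    · simp only [hNg, Finset.mem_filter] at h ⊢
      exact ⟨h.1, ne_of_lt h.2⟩
    · simp only [hP, Finset.mem_filter] at h ⊢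
      exact ⟨h.1, (ne_of_lt h.2).symm⟩
  have hdisj : Disjoint Ng P := by
    rw [Finset.disjoint_left]
    intro i hi hi'
    simp only [hNg, Finset.mem_filter] at hi
    simp only [hP, Finset.mem_filter] at hi'
    linarith [hi.2, hi'.2]
  have hcard : Ng.card + P.card ≤ 2 := by
    rw [← Finset.card_union_of_disjoint hdisj]
    exact le_trans (Finset.card_le_card hsub) (card_nonzero_eigs_le m n)
  have hsplit : ∑ i, lam i = (∑ i ∈ Ng, lam i) + ∑ i ∈ Ngᶜ, lam i :=
    (Finset.sum_add_sum_compl Ng _).symm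
  have hsplit' : ∑ i, lam i = (∑ i ∈ P, lam i) + ∑ i ∈ Pᶜ, lam i :=
    (Finset.sum_add_sum_compl P _).symm
  constructor
  · by_contra hc
    push_neg at hc
    have hPempty : P = ∅ := by
      rw [← Finset.card_eq_zero]; omega
    have hzero : ∑ i ∈ Ngᶜ, lam i = 0 := by
      apply Finset.sum_eq_zero
      intro i hi
      have h1 : ¬ lam i < 0 := by
        have := Finset.mem_compl.mp hi
        simp only [hNg, Finset.mem_filter, Finset.mem_univ, true_and] at this
        exact this
      have h2 : ¬ 0 < lam i := by
        intro h
        have : i ∈ P := by simp only [hP, Finset.mem_filter]; exact ⟨Finset.mem_univ _, h⟩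
        rw [hPempty] at this; exact absurd this (Finset.notMem_empty _)
      linarith
    have hneg : ∑ i ∈ Ng, lam i < 0 := by
      have hne : Ng.Nonempty := Finset.card_pos.mp (by omega)
      calc ∑ i ∈ Ng, lam i < ∑ i ∈ Ng, (0:ℝ) := by
            apply Finset.sum_lt_sum_of_nonempty hne
            intro i hi
            simp only [hNg, Finset.mem_filter] at hi
            exact hi.2
        _ = 0 := by simp
    rw [hsplit, hzero] at hsum
    linarith
  · by_contra hc
    push_neg at hc
    have hNgempty : Ng = ∅ := by
      rw [← Finset.card_eq_zero]; omega
    have hzero : ∑ i ∈ Pᶜ, lam i = 0 := by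
      apply Finset.sum_eq_zero
      intro i hi
      have h1 : ¬ 0 < lam i := by
        have := Finset.mem_compl.mp hi
        simp only [hP, Finset.mem_filter, Finset.mem_univ, true_and] at this
        exact this
      have h2 : ¬ lam i < 0 := by
        intro h
        have : i ∈ Ng := by simp only [hNg, Finset.mem_filter]; exact ⟨Finset.mem_univ _, h⟩
        rw [hNgempty] at this; exact absurd this (Finset.notMem_empty _)
      linarith
    have hpos : 0 < ∑ i ∈ P, lam i := by
      have hne : P.Nonempty := Finset.card_pos.mp (by omega)
      calc (0:ℝ) = ∑ i ∈ P, (0:ℝ) := by simp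
        _ < ∑ i ∈ P, lam i := by
            apply Finset.sum_lt_sum_of_nonempty hne
            intro i hi
            simp only [hP, Finset.mem_filter] at hi
            exact hi.2
    rw [hsplit', hzero] at hsum
    linarith

lemma K_count_nonneg :
    (m + n) - 1 ≤
      (Finset.univ.filter fun i => 0 ≤ (adjMatR_isHermitian (compBip m n)).eigenvalues i).card := by
  classical
  have h := (K_neg_card_le_one m n).1
  have hsplit := Finset.card_filter_add_card_filter_not
    (s := (Finset.univ : Finset (Fin (m+n))))
    (p := fun i => 0 ≤ (adjMatR_isHermitian (compBip m n)).eigenvalues i)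
  have hcompl : (Finset.univ.filter fun i =>
      ¬ 0 ≤ (adjMatR_isHermitian (compBip m n)).eigenvalues i).card
      = (Finset.univ.filter fun i =>
        (adjMatR_isHermitian (compBip m n)).eigenvalues i < 0).card := by
    congr 1
    apply Finset.filter_congr
    intro i _
    simp [not_le]
  rw [hcompl] at hsplit
  simp only [Finset.card_univ, Fintype.card_fin] at hsplit
  omega

lemma K_count_nonpos :
    (m + n) - 1 ≤
      (Finset.univ.filter fun i => (adjMatR_isHermitian (compBip m n)).eigenvalues i ≤ 0).card := by
  classical
  have h := (K_neg_card_le_one m n).2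
  have hsplit := Finset.card_filter_add_card_filter_not
    (s := (Finset.univ : Finset (Fin (m+n))))
    (p := fun i => (adjMatR_isHermitian (compBip m n)).eigenvalues i ≤ 0)
  have hcompl : (Finset.univ.filter fun i =>
      ¬ (adjMatR_isHermitian (compBip m n)).eigenvalues i ≤ 0).card
      = (Finset.univ.filter fun i =>
        0 < (adjMatR_isHermitian (compBip m n)).eigenvalues i).card := by
    congr 1
    apply Finset.filter_congr
    intro i _
    simp [not_le]
  rw [hcompl] at hsplit
  simp only [Finset.card_univ, Fintype.card_fin] at hsplit
  omega

lemma K_eigval0_ge_one (hm : 0 < m) (hn : 0 < n) : 1 ≤ eigval (compBip m n) 0 := by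
  have hmn : m < m + n := by omega
  set a : Fin (m+n) := ⟨0, by omega⟩ with ha
  set b : Fin (m+n) := ⟨m, hmn⟩ with hb
  have hne : a ≠ b := by
    intro h
    have := congrArg Fin.val h
    simp [ha, hb] at this
    omega
  have hadj : (compBip m n).Adj a b := by
    rw [compBip_adj]
    left
    simp [ha, hb]
    omega
  have hex : ∃ i, (1:ℝ) ≤ (adjMatR_isHermitian (compBip m n)).eigenvalues i := by
    apply one_eig_ge (adjMatR (compBip m n)) (adjMatR_isHermitian (compBip m n))
      (x := vec2 a b 1 1)
    · rw [dot_vec2 _ _ _ _ hne]; norm_num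
    · rw [dot_vec2 _ _ _ _ hne, quad_vec2 _ _ _ hne, adjMatR_of_adj _ hadj]
      norm_num
  obtain ⟨i, hi⟩ := hex
  apply eigval_ge_of_count
  have : i ∈ Finset.univ.filter fun j =>
      (1:ℝ) ≤ (adjMatR_isHermitian (compBip m n)).eigenvalues j :=
    Finset.mem_filter.mpr ⟨Finset.mem_univ _, hi⟩
  have := Finset.card_pos.mpr ⟨i, this⟩
  omega

lemma K_eigval_mid_zero (h3 : 3 ≤ m + n) : eigval (compBip m n) (m + n - 2) = 0 := by
  apply le_antisymm
  · have h1 : eigval (compBip m n) ((m+n) - (m+n-1)) ≤ 0 :=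
      eigval_le_of_count (compBip m n) (by omega) (K_count_nonpos m n)
    have hidx : (m+n) - (m+n-1) = 1 := by omega
    rw [hidx] at h1
    calc eigval (compBip m n) (m+n-2) ≤ eigval (compBip m n) 1 :=
          eigval_anti _ (by omega) (by omega)
      _ ≤ 0 := h1
  · apply eigval_ge_of_count
    have := K_count_nonneg m n
    omega
end KSpec

lemma compBipPlus_adj (r s t : ℕ) (p q : Fin (r+s+t)) :
    (compBipPlus r s t).Adj p q ↔ p ≠ q ∧
      (((p:ℕ) < r ∧ r ≤ (q:ℕ) ∧ (q:ℕ) < r+s) ∨ ((q:ℕ) < r ∧ r ≤ (p:ℕ) ∧ (p:ℕ) < r+s)) := by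
  rw [compBipPlus, SimpleGraph.fromRel_adj]

lemma classify {N : ℕ} (G : SimpleGraph (Fin N))
    (hedge : ∃ a b, G.Adj a b)
    (htri : ¬ ∃ a b c, G.Adj a b ∧ G.Adj a c ∧ G.Adj b c)
    (h2k2 : ¬ ∃ a b c d, G.Adj a b ∧ G.Adj c d ∧ ¬G.Adj a c ∧ ¬G.Adj a d ∧ ¬G.Adj b c ∧
      ¬G.Adj b d ∧ a ≠ c ∧ a ≠ d ∧ b ≠ c ∧ b ≠ d)
    (hp4 : ¬ ∃ a b c d, G.Adj a b ∧ G.Adj b c ∧ G.Adj c d ∧ ¬G.Adj a c ∧ ¬G.Adj a d ∧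
      ¬G.Adj b d ∧ a ≠ c ∧ a ≠ d ∧ b ≠ d) :
    ∃ r s t : ℕ, 0 < r ∧ 0 < s ∧ Nonempty (G ≃g compBipPlus r s t) := by
  classical
  obtain ⟨a, b, hab⟩ := hedge
  set X : Finset (Fin N) := Finset.univ.filter (fun v => G.Adj a v) with hXdef
  set Y : Finset (Fin N) := Finset.univ.filter (fun v => G.Adj b v) with hYdef
  have hmemX : ∀ v, v ∈ X ↔ G.Adj a v := fun v => by simp [hXdef]
  have hmemY : ∀ v, v ∈ Y ↔ G.Adj b v := fun v => by simp [hYdef]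
  have hbX : b ∈ X := (hmemX b).mpr hab
  have haY : a ∈ Y := (hmemY a).mpr hab.symm
  have haX : a ∉ X := fun h => G.loopless.irrefl a ((hmemX a).mp h)
  have hbY : b ∉ Y := fun h => G.loopless.irrefl b ((hmemY b).mp h)
  have hdisj : ∀ v, v ∈ X → v ∈ Y → False := by
    intro v hvX hvY
    exact htri ⟨a, b, v, hab, (hmemX v).mp hvX, (hmemY v).mp hvY⟩
  -- no edges within X
  have hinX : ∀ x ∈ X, ∀ x' ∈ X, ¬ G.Adj x x' := by
    intro x hx x' hx' hadj
    exact htri ⟨x, x', a, hadj, ((hmemX x).mp hx).symm, ((hmemX x').mp hx').symm⟩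
  have hinY : ∀ y ∈ Y, ∀ y' ∈ Y, ¬ G.Adj y y' := by
    intro y hy y' hy' hadj
    exact htri ⟨y, y', b, hadj, ((hmemY y).mp hy).symm, ((hmemY y').mp hy').symm⟩
  -- complete bipartite between X and Y
  have hXY : ∀ x ∈ X, ∀ y ∈ Y, G.Adj x y := by
    intro x hx y hy
    by_cases hxb : x = b
    · subst hxb; exact (hmemY y).mp hy
    by_cases hya : y = a
    · subst hya; exact ((hmemX x).mp hx).symm
    by_contra hxy
    have hax : G.Adj a x := (hmemX x).mp hx
    have hby : G.Adj b y := (hmemY y).mp hy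
    -- induced P4 : x - a - b - y
    refine hp4 ⟨x, a, b, y, hax.symm, hab, hby, ?_, hxy, ?_, ?_, ?_, ?_⟩
    · intro hxb2; exact hinX x hx b hbX hxb2
    · intro hay; exact hdisj y ((hmemX y).mpr hay) hy
    · exact hxb
    · intro hxyeq
      subst hxyeq
      exact hdisj x hx hy
    · exact fun h => hya h.symm
  -- vertices outside X ∪ Y are isolated
  have hiso : ∀ z, z ∉ X → z ∉ Y → ∀ w, ¬ G.Adj z w := by
    intro z hzX hzY w hzw
    have hza : ¬ G.Adj a z := fun h => hzX ((hmemX z).mpr h)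
    have hzb : ¬ G.Adj b z := fun h => hzY ((hmemY z).mpr h)
    have hzna : z ≠ a := fun h => hzY (h ▸ haY)
    have hznb : z ≠ b := fun h => hzX (h ▸ hbX)
    by_cases hwX : w ∈ X
    · -- induced P4: z - w - a - b
      have hwa : G.Adj w a := ((hmemX w).mp hwX).symm
      have hwb : ¬ G.Adj w b := hinX w hwX b hbX
      refine hp4 ⟨z, w, a, b, hzw, hwa, hab, fun h => hza h.symm, fun h => hzb h.symm, hwb,
        hzna, hznb, ?_⟩
      intro h; rw [h] at hzw; exact hzb hzw.symm
    by_cases hwY : w ∈ Y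
    · -- induced P4: z - w - b - a
      have hwb : G.Adj w b := ((hmemY w).mp hwY).symm
      have hwa : ¬ G.Adj w a := hinY w hwY a haY
      refine hp4 ⟨z, w, b, a, hzw, hwb, hab.symm, fun h => hzb h.symm, fun h => hza h.symm, hwa,
        hznb, hzna, ?_⟩
      intro h; rw [h] at hzw; exact hza hzw.symm
    · -- 2K2 : ab, zw
      have hwa : ¬ G.Adj a w := fun h => hwX ((hmemX w).mpr h)
      have hwb : ¬ G.Adj b w := fun h => hwY ((hmemY w).mpr h)
      have hwna : w ≠ a := fun h => hwY (h ▸ haY)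
      have hwnb : w ≠ b := fun h => hwX (h ▸ hbX)
      exact h2k2 ⟨a, b, z, w, hab, hzw, hza, hwa, hzb, hwb,
        fun h => hzna h.symm, fun h => hwna h.symm, fun h => hznb h.symm, fun h => hwnb h.symm⟩
  -- adjacency characterization
  have hchar : ∀ u v, G.Adj u v ↔ ((u ∈ X ∧ v ∈ Y) ∨ (u ∈ Y ∧ v ∈ X)) := by
    intro u v
    constructor
    · intro huv
      by_cases huX : u ∈ X
      · by_cases hvY : v ∈ Y
        · exact Or.inl ⟨huX, hvY⟩
        · by_cases hvX : v ∈ X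
          · exact absurd huv (hinX u huX v hvX)
          · exact absurd huv.symm (hiso v hvX hvY u)
      · by_cases huY : u ∈ Y
        · by_cases hvX : v ∈ X
          · exact Or.inr ⟨huY, hvX⟩
          · by_cases hvY : v ∈ Y
            · exact absurd huv (hinY u huY v hvY)
            · exact absurd huv.symm (hiso v hvX hvY u)
        · exact absurd huv (hiso u huX huY v)
    · rintro (⟨h1, h2⟩ | ⟨h1, h2⟩)
      · exact hXY u h1 v h2
      · exact (hXY v h2 u h1).symm
  -- construct the isomorphism
  set Z : Finset (Fin N) := (X ∪ Y)ᶜ with hZdef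
  set r := X.card with hr
  set s := Y.card with hs
  set t := Z.card with ht
  have hdisjXY : Disjoint X Y := Finset.disjoint_left.mpr (fun v hv hv' => hdisj v hv hv')
  have hcardsum : r + s + t = N := by
    have h1 : (X ∪ Y).card = r + s := Finset.card_union_of_disjoint hdisjXY
    have h2 : t = N - (r + s) := by
      rw [ht, hZdef, Finset.card_compl, h1]; simp
    have h3 : r + s ≤ N := by
      rw [← h1]; simpa using Finset.card_le_univ (X ∪ Y)
    omega
  have hmemZ : ∀ v, v ∈ Z ↔ (v ∉ X ∧ v ∉ Y) := by
    intro v; rw [hZdef]; simp [Finset.mem_union, not_or]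
  -- the map
  let eX := X.equivFin
  let eY := Y.equivFin
  let eZ := Z.equivFin
  let f : Fin N → Fin (r + s + t) := fun v =>
    if hv : v ∈ X then ⟨(eX ⟨v, hv⟩ : Fin r), by omega⟩
    else if hv' : v ∈ Y then ⟨r + (eY ⟨v, hv'⟩ : Fin s), by have := (eY ⟨v, hv'⟩).isLt; omega⟩
    else ⟨r + s + (eZ ⟨v, (hmemZ v).mpr ⟨hv, hv'⟩⟩ : Fin t), by
      have := (eZ ⟨v, (hmemZ v).mpr ⟨hv, hv'⟩⟩).isLt; omega⟩
  have hfX : ∀ v (hv : v ∈ X), (f v : ℕ) = (eX ⟨v, hv⟩ : Fin r) := by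
    intro v hv; simp only [f, dif_pos hv]
  have hfY : ∀ v (hv : v ∉ X) (hv' : v ∈ Y), (f v : ℕ) = r + (eY ⟨v, hv'⟩ : Fin s) := by
    intro v hv hv'; simp only [f, dif_neg hv, dif_pos hv']
  have hfZ : ∀ v (hv : v ∉ X) (hv' : v ∉ Y),
      (f v : ℕ) = r + s + (eZ ⟨v, (hmemZ v).mpr ⟨hv, hv'⟩⟩ : Fin t) := by
    intro v hv hv'; simp only [f, dif_neg hv, dif_neg hv']
  have hrangeX : ∀ v, v ∈ X → (f v : ℕ) < r := by
    intro v hv; rw [hfX v hv]; exact (eX ⟨v, hv⟩).isLt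
  have hrangeY : ∀ v, v ∈ Y → r ≤ (f v : ℕ) ∧ (f v : ℕ) < r + s := by
    intro v hv
    have hvX : v ∉ X := fun h => hdisj v h hv
    rw [hfY v hvX hv]
    have := (eY ⟨v, hv⟩).isLt; omega
  have hrangeZ : ∀ v, v ∉ X → v ∉ Y → r + s ≤ (f v : ℕ) := by
    intro v hv hv'; rw [hfZ v hv hv']; omega
  have hinj : Function.Injective f := by
    intro u v huv
    have huv' : (f u : ℕ) = (f v : ℕ) := congrArg Fin.val huv
    by_cases huX : u ∈ X <;> by_cases hvX : v ∈ X
    · have h1 := hfX u huX; have h2 := hfX v hvX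
      have he : eX ⟨u, huX⟩ = eX ⟨v, hvX⟩ := Fin.ext (by omega)
      exact Subtype.mk_eq_mk.mp (eX.injective he)
    · by_cases hvY : v ∈ Y
      · have := hrangeX u huX; have := hrangeY v hvY; omega
      · have := hrangeX u huX; have := hrangeZ v hvX hvY; omega
    · by_cases huY : u ∈ Y
      · have := hrangeY u huY; have := hrangeX v hvX; omega
      · have := hrangeZ u huX huY; have := hrangeX v hvX; omega
    · by_cases huY : u ∈ Y <;> by_cases hvY : v ∈ Y
      · have h1 := hfY u huX huY; have h2 := hfY v hvX hvY
        have he : eY ⟨u, huY⟩ = eY ⟨v, hvY⟩ := Fin.ext (by omega)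
        exact Subtype.mk_eq_mk.mp (eY.injective he)
      · have := hrangeY u huY; have := hrangeZ v hvX hvY; omega
      · have := hrangeZ u huX huY; have := hrangeY v hvY; omega
      · have h1 := hfZ u huX huY; have h2 := hfZ v hvX hvY
        have he : eZ ⟨u, (hmemZ u).mpr ⟨huX, huY⟩⟩ = eZ ⟨v, (hmemZ v).mpr ⟨hvX, hvY⟩⟩ :=
          Fin.ext (by omega)
        exact Subtype.mk_eq_mk.mp (eZ.injective he)
  have hbij : Function.Bijective f := by
    rw [Fintype.bijective_iff_injective_and_card]
    exact ⟨hinj, by simp [hcardsum]⟩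
  refine ⟨r, s, t, Finset.card_pos.mpr ⟨b, hbX⟩, Finset.card_pos.mpr ⟨a, haY⟩,
    ⟨⟨Equiv.ofBijective f hbij, ?_⟩⟩⟩
  intro u v
  rw [compBipPlus_adj]
  simp only [Equiv.ofBijective_apply]
  rw [hchar u v]
  constructor
  · rintro ⟨hne, (⟨h1, h2, h3⟩ | ⟨h1, h2, h3⟩)⟩
    · -- f u < r so u ∈ X ; r ≤ f v < r + s so v ∈ Y
      have huX : u ∈ X := by
        by_contra huX
        by_cases huY : u ∈ Y
        · have := hrangeY u huY; omega
        · have := hrangeZ u huX huY; omega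
      have hvY : v ∈ Y := by
        by_cases hvX : v ∈ X
        · have := hrangeX v hvX; omega
        · by_contra hvY
          have := hrangeZ v hvX hvY; omega
      exact Or.inl ⟨huX, hvY⟩
    · have hvX : v ∈ X := by
        by_contra hvX
        by_cases hvY : v ∈ Y
        · have := hrangeY v hvY; omega
        · have := hrangeZ v hvX hvY; omega
      have huY : u ∈ Y := by
        by_cases huX : u ∈ X
        · have := hrangeX u huX; omega
        · by_contra huY
          have := hrangeZ u huX huY; omega
      exact Or.inr ⟨huY, hvX⟩
  · rintro (⟨h1, h2⟩ | ⟨h1, h2⟩)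
    · have hu := hrangeX u h1
      have hv := hrangeY v h2
      exact ⟨fun h => by have := congrArg Fin.val h; omega, Or.inl ⟨hu, hv.1, hv.2⟩⟩
    · have hu := hrangeY u h1
      have hv := hrangeX v h2
      exact ⟨fun h => by have := congrArg Fin.val h; omega, Or.inr ⟨hv, hu.1, hu.2⟩⟩
theorem specDist_ge_one_of_not_bip (m n : ℕ) (hm : 0 < m) (hn : 0 < n)
    (G : SimpleGraph (Fin (m + n)))
    (hG : ¬ ∃ r s t : ℕ, 0 < r ∧ 0 < s ∧ Nonempty (G ≃g compBipPlus r s t))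
    (hl : eigval G 1 ≤ Real.sqrt 2 - 1) :
    1 ≤ specDist G (compBip m n) := by
  have hsqrt2 : Real.sqrt 2 < 2 := by
    nlinarith [Real.sq_sqrt (show (0:ℝ) ≤ 2 by norm_num), Real.sqrt_nonneg 2]
  by_cases hedge : ∃ a b, G.Adj a b
  · by_cases htri : ∃ a b c, G.Adj a b ∧ G.Adj a c ∧ G.Adj b c
    · -- triangle case
      obtain ⟨a, b, c, hab, hac, hbc⟩ := htri
      have h3 : 3 ≤ m + n := by
        have hcard : ({a, b, c} : Finset (Fin (m+n))).card = 3 := by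
          rw [Finset.card_insert_of_notMem (by simp [hab.ne, hac.ne]),
            Finset.card_insert_of_notMem (by simp [hbc.ne]), Finset.card_singleton]
        calc 3 = ({a, b, c} : Finset (Fin (m+n))).card := hcard.symm
          _ ≤ (Finset.univ : Finset (Fin (m+n))).card := Finset.card_le_univ _
          _ = m + n := by simp
      have hcount := triangle_eigs G hab hac hbc
      have hG2 : eigval G ((m+n) - 2) ≤ -1 :=
        eigval_le_of_count G (by norm_num) hcount
      have hK2 : eigval (compBip m n) (m + n - 2) = 0 := K_eigval_mid_zero m n h3
      have hsd := abs_eigval_le_specDist G (compBip m n) (i := m + n - 2) (by omega)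
      calc (1:ℝ) ≤ |eigval G (m+n-2) - eigval (compBip m n) (m+n-2)| := by
            rw [hK2, sub_zero, abs_of_nonpos (by linarith)]
            linarith
        _ ≤ specDist G (compBip m n) := hsd
    · by_cases h2k2 : ∃ a b c d, G.Adj a b ∧ G.Adj c d ∧ ¬G.Adj a c ∧ ¬G.Adj a d ∧
        ¬G.Adj b c ∧ ¬G.Adj b d ∧ a ≠ c ∧ a ≠ d ∧ b ≠ c ∧ b ≠ d
      · exfalso
        obtain ⟨a, b, c, d, hab, hcd, hac, had, hbc, hbd, nac, nad, nbc, nbd⟩ := h2k2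
        have hcount := twoK2_eigs G hab hcd hac had hbc hbd nac nad nbc nbd
        have h1 : (1:ℝ) ≤ eigval G 1 := eigval_ge_of_count G hcount
        linarith
      · by_cases hp4 : ∃ a b c d, G.Adj a b ∧ G.Adj b c ∧ G.Adj c d ∧ ¬G.Adj a c ∧
          ¬G.Adj a d ∧ ¬G.Adj b d ∧ a ≠ c ∧ a ≠ d ∧ b ≠ d
        · exfalso
          obtain ⟨a, b, c, d, hab, hbc, hcd, hac, had, hbd, nac, nad, nbd⟩ := hp4
          have hcount := p4_eigs G hab hbc hcd hac had hbd nac nad nbd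
          have h1 : (Real.sqrt 5 - 1)/2 ≤ eigval G 1 := eigval_ge_of_count G hcount
          have hs5 : (Real.sqrt 5)^2 = 5 := Real.sq_sqrt (by norm_num)
          have hs2 : (Real.sqrt 2)^2 = 2 := Real.sq_sqrt (by norm_num)
          have h50 : (0:ℝ) ≤ Real.sqrt 5 := Real.sqrt_nonneg 5
          have h20 : (0:ℝ) ≤ Real.sqrt 2 := Real.sqrt_nonneg 2
          nlinarith [sq_nonneg (2*Real.sqrt 2 - 1 - Real.sqrt 5),
            sq_nonneg (Real.sqrt 5 - Real.sqrt 2), mul_nonneg h20 h50]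
        · exact absurd (classify G hedge htri h2k2 hp4) hG
  · -- edgeless
    push_neg at hedge
    have h0 : eigval G 0 = 0 := eigval_of_edgeless G hedge 0
    have hK : 1 ≤ eigval (compBip m n) 0 := K_eigval0_ge_one m n hm hn
    have hsd := abs_eigval_le_specDist G (compBip m n) (i := 0) (by omega)
    calc (1:ℝ) ≤ |eigval G 0 - eigval (compBip m n) 0| := by
          rw [h0, zero_sub, abs_neg]
          exact le_trans hK (le_abs_self _)
      _ ≤ specDist G (compBip m n) := hsd
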